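/- Let n, r be positive integers and c, d integers. Set 𝒹₁ = gcd(c−d, n) and 𝒹₂ = gcd(c+(r−1)d, n). The smallest positive integer A such that the system B·x ≡ A·(1,...,1)^T (mod n) has a solution x ∈ ℤ^r equals gcd(𝒹₂, d·n/𝒹₁), where B is the r×r matrix with diagonal entries c and off-diagonal entries d. -/

import Mathlib

theorem stmt_5 (n r : ℕ) (hn : 0 < n) (hr : 0 < r) (c d : ℤ)
    (B : Matrix (Fin r) (Fin r) ℤ)
    (hB : ∀ i j, B i j = if i = j then c else d) :
    IsLeast {a : ℤ | 0 < a ∧ ∃ x : Fin r → ℤ, ∀ i, B.mulVec x i ≡ a [ZMOD (n : ℤ)]}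
      ((Int.gcd ((Int.gcd (c + (r - 1) * d) n : ℤ))
        (d * n / (Int.gcd (c - d) n : ℤ)) : ℤ)) := by
  have hn' : (0:ℤ) < n := by exact_mod_cast hn
  set A : ℤ := c + ((r:ℤ) - 1) * d with hA
  set g1 : ℤ := (Int.gcd (c - d) n : ℤ) with hg1
  set g2 : ℤ := (Int.gcd A n : ℤ) with hg2
  set m : ℤ := d * n / g1 with hm
  set g : ℤ := (Int.gcd g2 m : ℤ) with hg
  have hg1pos : 0 < g1 := by
    rw [hg1]; exact_mod_cast Int.gcd_pos_iff.mpr (Or.inr hn'.ne')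
  have hg2pos : 0 < g2 := by
    rw [hg2]; exact_mod_cast Int.gcd_pos_iff.mpr (Or.inr hn'.ne')
  have hgpos : 0 < g := by
    rw [hg]; exact_mod_cast Int.gcd_pos_iff.mpr (Or.inl hg2pos.ne')
  have h1n : g1 ∣ (n:ℤ) := Int.gcd_dvd_right _ _
  have h1c : g1 ∣ c - d := Int.gcd_dvd_left _ _
  have h2n : g2 ∣ (n:ℤ) := Int.gcd_dvd_right _ _
  have h2A : g2 ∣ A := Int.gcd_dvd_left _ _
  have hgg2 : g ∣ g2 := Int.gcd_dvd_left _ _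
  have hgm : g ∣ m := Int.gcd_dvd_right _ _
  set M : ℤ := (n:ℤ) / g1 with hM
  obtain ⟨e, he⟩ := h1c
  have hg1M : g1 * M = n := Int.mul_ediv_cancel' h1n
  have hdM : d * M = m := by rw [hm, hM, Int.mul_ediv_assoc d h1n]
  -- mulVec formula
  have key : ∀ (x : Fin r → ℤ) (i : Fin r),
      B.mulVec x i = (c - d) * x i + d * ∑ j, x j := by
    intro x i
    simp only [Matrix.mulVec, dotProduct, hB]
    have h : ∀ j, (if i = j then c else d) * x j
        = (if i = j then (c - d) * x j else 0) + d * x j := by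
      intro j; split <;> ring
    simp only [h]
    rw [Finset.sum_add_distrib, Finset.sum_ite_eq, Finset.mul_sum]
    simp
  set i0 : Fin r := ⟨0, hr⟩ with hi0
  constructor
  · -- membership
    refine ⟨hgpos, ?_⟩
    set u : ℤ := Int.gcdA g2 m with hu
    set v : ℤ := Int.gcdB g2 m with hv
    have hbez : g = g2 * u + m * v := Int.gcd_eq_gcd_ab g2 m
    set p : ℤ := Int.gcdA A n with hp
    set q : ℤ := Int.gcdB A n with hq
    have hbez2 : g2 = A * p + n * q := Int.gcd_eq_gcd_ab A n
    set X : ℤ := p * u with hX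
    refine ⟨fun i => X + if i = i0 then M * v else 0, fun i => ?_⟩
    have hsum : (∑ j : Fin r, (X + if j = i0 then M * v else 0)) = r * X + M * v := by
      rw [Finset.sum_add_distrib, Finset.sum_const, Finset.sum_ite_eq' Finset.univ i0
        (fun _ => M * v)]
      simp [mul_comm]
    rw [Int.modEq_iff_dvd, key, hsum]
    by_cases h : i = i0
    · refine ⟨q * u - e * v, ?_⟩
      simp only [h, if_pos]
      rw [hbez, hbez2, ← hdM, hA, hX]
      linear_combination (-(M * v)) * he - (e * v) * hg1M
    · refine ⟨q * u, ?_⟩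
      simp only [h, if_neg, if_false]
      rw [hbez, hbez2, ← hdM, hA, hX]
      ring
  · -- lower bound
    rintro a ⟨ha, x, hx⟩
    refine Int.le_of_dvd ha ?_
    have hgn : g ∣ (n:ℤ) := hgg2.trans h2n
    -- differences
    have hdiff : ∀ i, M ∣ x i - x i0 := by
      intro i
      have h1 : (n:ℤ) ∣ (c - d) * (x i - x i0) := by
        have := ((hx i).trans (hx i0).symm).dvd
        rw [key, key] at this
        have heq : (c - d) * x i0 + d * ∑ j, x j - ((c - d) * x i + d * ∑ j, x j)
            = (c - d) * (x i0 - x i) := by ring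
        rw [heq] at this
        have := dvd_neg.mpr this
        rw [show -((c-d)*(x i0 - x i)) = (c-d)*(x i - x i0) by ring] at this
        exact this
      have h2 : M ∣ e * (x i - x i0) := by
        rcases h1 with ⟨k, hk⟩
        refine ⟨k, ?_⟩
        have : g1 * (e * (x i - x i0)) = g1 * (M * k) := by
          rw [← mul_assoc, ← he, hk, ← hg1M]; ring
        exact mul_left_cancel₀ hg1pos.ne' this
      have hcop : IsCoprime M e := by
        rw [Int.isCoprime_iff_gcd_eq_one]
        have hE : e = (c - d) / g1 := by
          rw [he]; rw [Int.mul_ediv_cancel_left _ hg1pos.ne']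
        have h0 : 0 < Int.gcd (c - d) (n:ℤ) := Int.gcd_pos_iff.mpr (Or.inr hn'.ne')
        have h1 := Int.gcd_div_gcd_div_gcd h0
        rw [Int.gcd_comm, hE, hM, hg1]
        exact h1
      exact hcop.dvd_of_dvd_mul_left h2
    have hS : M ∣ (∑ j, x j) - r * x i0 := by
      have : (∑ j, x j) - r * x i0 = ∑ j : Fin r, (x j - x i0) := by
        rw [Finset.sum_sub_distrib, Finset.sum_const]
        simp [mul_comm]
      rw [this]
      exact Finset.dvd_sum fun j _ => hdiff j
    obtain ⟨T, hT⟩ := hS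
    have hxa : (n:ℤ) ∣ a - ((c - d) * x i0 + d * ∑ j, x j) := by
      have := (hx i0).dvd
      rw [key] at this
      exact this
    have hentry : (c - d) * x i0 + d * ∑ j, x j = A * x i0 + m * T := by
      have hSe : (∑ j, x j) = r * x i0 + M * T := by linarith [hT]
      rw [hSe, ← hdM, hA]; ring
    have : g ∣ a - (A * x i0 + m * T) := by
      rw [← hentry]; exact hgn.trans hxa
    have h2 : g ∣ A * x i0 + m * T :=
      dvd_add ((hgg2.trans h2A).mul_right _) (hgm.mul_right _)
    have := dvd_add this h2
    rw [sub_add_cancel] at this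
    exact this
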